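/- arXiv:1208.2823 — 3 statements merged into one kernel-verified Lean document; each statement's English description precedes it below -/
import Mathlib

section
/- Let V be a real subspace of ℂ^n of constant Kähler angle φ ∈ [0, π/2), and define J_φ : V → V by J_φ v = (1/cos φ)·π_V(Jv). Then J_φ is a surjective real-linear isometry of V which is skew-symmetric, i.e. ⟨J_φ v, w⟩ = −⟨v, J_φ w⟩ for all v, w ∈ V, and satisfies J_φ² = −id_V; in particular J_φ endows V with the structure of a complex vector space. -/
noncomputable section

/-- `ℂ^n` as a Euclidean space. -/
abbrev En (n : ℕ) : Type := EuclideanSpace ℂ (Fin n)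

/-- The complex structure `J`, multiplication by `i`. -/
def Jc {n : ℕ} (x : En n) : En n := Complex.I • x

/-- A real subspace `V` of `ℂ^n` has constant Kähler angle `φ` if
`‖π_V (J v)‖² = cos²(φ) ‖v‖²` for all `v ∈ V`. -/
def HasConstKahlerAngle {n : ℕ} (V : Submodule ℝ (En n)) (φ : ℝ) : Prop :=
  ∀ v ∈ V, ‖(Submodule.orthogonalProjectionOnto V (Jc v) : En n)‖ ^ 2 = Real.cos φ ^ 2 * ‖v‖ ^ 2

set_option maxHeartbeats 1000000 in
lemma real_inner_En_re {n : ℕ} (x y : En n) :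
    (inner ℝ x y : ℝ) = Complex.re (inner ℂ x y : ℂ) := by
  simp [PiLp.inner_apply, map_sum, real_inner_eq_re_inner ℂ]

set_option maxHeartbeats 1000000 in
lemma real_inner_Jc_left {n : ℕ} (x y : En n) :
    (inner ℝ (Jc x) y : ℝ) = Complex.im (inner ℂ x y : ℂ) := by
  rw [real_inner_En_re]
  have h : (inner ℂ (Jc x) y : ℂ) = -Complex.I * (inner ℂ x y : ℂ) := by
    simp [Jc, inner_smul_left, mul_comm]
  rw [h]
  simp [Complex.mul_im]

set_option maxHeartbeats 1000000 in
lemma real_inner_Jc_right {n : ℕ} (x y : En n) :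
    (inner ℝ x (Jc y) : ℝ) = -Complex.im (inner ℂ x y : ℂ) := by
  rw [real_inner_En_re]
  have h : (inner ℂ x (Jc y) : ℂ) = Complex.I * (inner ℂ x y : ℂ) := by
    simp [Jc, inner_smul_right]
  rw [h]
  simp [Complex.mul_im]

set_option maxHeartbeats 1000000 in
lemma Jphi_norm (n : ℕ) (V : Submodule ℝ (En n))
    (φ : ℝ) (hφ0 : 0 ≤ φ) (hφ1 : φ < Real.pi / 2)
    (hV : HasConstKahlerAngle V φ) (Jφ : V →ₗ[ℝ] V)
    (hJφ : ∀ v : V, (Jφ v : En n)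
        = (1 / Real.cos φ) • (Submodule.orthogonalProjectionOnto V (Jc (v : En n)) : En n)) :
    ∀ v : V, ‖Jφ v‖ = ‖v‖ := by
  have hc : 0 < Real.cos φ := Real.cos_pos_of_mem_Ioo ⟨by linarith [Real.pi_pos], hφ1⟩
  intro v
  have h1 : ‖(Jφ v : En n)‖
      = (1 / Real.cos φ) * ‖(Submodule.orthogonalProjectionOnto V (Jc (v : En n)) : En n)‖ := by
    rw [hJφ v, norm_smul, Real.norm_eq_abs, abs_of_pos (by positivity)]
  have h2 := hV (v : En n) v.2
  have h3 : ‖(Submodule.orthogonalProjectionOnto V (Jc (v : En n)) : En n)‖ = Real.cos φ * ‖(v : En n)‖ := by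
    have hnn : 0 ≤ Real.cos φ * ‖(v : En n)‖ := by positivity
    calc ‖(Submodule.orthogonalProjectionOnto V (Jc (v : En n)) : En n)‖
        = Real.sqrt (‖(Submodule.orthogonalProjectionOnto V (Jc (v : En n)) : En n)‖ ^ 2) :=
          (Real.sqrt_sq (norm_nonneg _)).symm
      _ = Real.sqrt ((Real.cos φ * ‖(v : En n)‖) ^ 2) := by rw [h2]; ring_nf
      _ = Real.cos φ * ‖(v : En n)‖ := Real.sqrt_sq hnn
  calc ‖Jφ v‖ = ‖(Jφ v : En n)‖ := rfl
    _ = (1 / Real.cos φ) * (Real.cos φ * ‖(v : En n)‖) := by rw [h1, h3]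
    _ = ‖v‖ := by field_simp; rfl

set_option maxHeartbeats 1000000 in
lemma Jphi_skew (n : ℕ) (V : Submodule ℝ (En n))
    (φ : ℝ) (Jφ : V →ₗ[ℝ] V)
    (hJφ : ∀ v : V, (Jφ v : En n)
        = (1 / Real.cos φ) • (Submodule.orthogonalProjectionOnto V (Jc (v : En n)) : En n)) :
    ∀ v w : V, (inner ℝ (Jφ v) w : ℝ) = -(inner ℝ v (Jφ w) : ℝ) := by
  intro v w
  have hL : (inner ℝ (Jφ v) w : ℝ)
      = (1 / Real.cos φ) * Complex.im (inner ℂ (v : En n) (w : En n) : ℂ) := by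
    rw [Submodule.coe_inner V (Jφ v) w, hJφ v,
      real_inner_smul_left ((Submodule.orthogonalProjectionOnto V (Jc (v : En n)) : En n)) (w : En n) (1 / Real.cos φ),
      ← Submodule.coe_inner V (Submodule.orthogonalProjectionOnto V (Jc (v : En n))) w,
      Submodule.inner_orthogonalProjectionOnto_eq_of_mem_right (K := V) w (Jc (v : En n)),
      real_inner_Jc_left]
  have hR : (inner ℝ (v : V) (Jφ w) : ℝ)
      = (1 / Real.cos φ) * -Complex.im (inner ℂ (v : En n) (w : En n) : ℂ) := by
    rw [Submodule.coe_inner V v (Jφ w), hJφ w,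
      real_inner_smul_right (v : En n) ((Submodule.orthogonalProjectionOnto V (Jc (w : En n)) : En n)) (1 / Real.cos φ),
      ← Submodule.coe_inner V v (Submodule.orthogonalProjectionOnto V (Jc (w : En n))),
      Submodule.inner_orthogonalProjectionOnto_eq_of_mem_left (K := V) v (Jc (w : En n)),
      real_inner_Jc_right]
  rw [hL, hR]
  ring

set_option maxHeartbeats 1000000 in
lemma Jphi_inner (n : ℕ) (V : Submodule ℝ (En n)) (Jφ : V →ₗ[ℝ] V)
    (hnorm : ∀ v : V, ‖Jφ v‖ = ‖v‖) :
    ∀ v w : V, (inner ℝ (Jφ v) (Jφ w) : ℝ) = (inner ℝ v w : ℝ) := by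
  intro v w
  rw [real_inner_eq_norm_add_mul_self_sub_norm_mul_self_sub_norm_mul_self_div_two (Jφ v) (Jφ w),
      real_inner_eq_norm_add_mul_self_sub_norm_mul_self_sub_norm_mul_self_div_two (v : V) w,
      ← map_add, hnorm, hnorm, hnorm]

set_option maxHeartbeats 1000000 in
lemma Jphi_sq (n : ℕ) (V : Submodule ℝ (En n)) (Jφ : V →ₗ[ℝ] V)
    (hskew : ∀ v w : V, (inner ℝ (Jφ v) w : ℝ) = -(inner ℝ v (Jφ w) : ℝ))
    (hinner : ∀ v w : V, (inner ℝ (Jφ v) (Jφ w) : ℝ) = (inner ℝ v w : ℝ)) :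
    ∀ v : V, Jφ (Jφ v) = -v := by
  intro v
  have hz : ∀ w : V, (inner ℝ (Jφ (Jφ v) + v) w : ℝ) = 0 := by
    intro w
    rw [inner_add_left (𝕜 := ℝ) (Jφ (Jφ v)) v w, hskew (Jφ v) w, hinner v w]
    ring
  have h7 := hz (Jφ (Jφ v) + v)
  have h0 : Jφ (Jφ v) + v = 0 := by
    rwa [inner_self_eq_zero (𝕜 := ℝ) (E := V)] at h7
  exact eq_neg_of_add_eq_zero_left h0

set_option maxHeartbeats 1000000 in
/-- On a real subspace of constant Kähler angle `φ ∈ [0, π/2)`, the operator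
`J_φ = (1/cos φ) π_V ∘ J` is a surjective skew-symmetric linear isometry of `V`
satisfying `J_φ² = -id`, hence a complex structure on `V`. -/
theorem Jphi_isometry_skew_complexStructure (n : ℕ) (V : Submodule ℝ (En n))
    (φ : ℝ) (hφ0 : 0 ≤ φ) (hφ1 : φ < Real.pi / 2)
    (hV : HasConstKahlerAngle V φ)
    (Jφ : V →ₗ[ℝ] V)
    (hJφ : ∀ v : V, (Jφ v : En n)
        = (1 / Real.cos φ) • (Submodule.orthogonalProjectionOnto V (Jc (v : En n)) : En n)) :
    Function.Surjective Jφ ∧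
    (∀ v : V, ‖Jφ v‖ = ‖v‖) ∧
    (∀ v w : V, (inner ℝ (Jφ v) w : ℝ) = -(inner ℝ v (Jφ w) : ℝ)) ∧
    (∀ v : V, Jφ (Jφ v) = -v) := by
  have hnorm := Jphi_norm n V φ hφ0 hφ1 hV Jφ hJφ
  have hskew := Jphi_skew n V φ Jφ hJφ
  have hsq := Jphi_sq n V Jφ hskew (Jphi_inner n V Jφ hnorm)
  refine ⟨?_, hnorm, hskew, hsq⟩
  intro v
  exact ⟨-(Jφ v), by rw [map_neg, hsq, neg_neg]⟩
end
end

section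
/- Every real subspace of ℂ^n with constant Kähler angle φ ∈ [0, π/2) has even real dimension. -/
noncomputable section

set_option maxHeartbeats 1000000
set_option synthInstance.maxHeartbeats 400000
open InnerProductSpace

/-- A real subspace of `ℂ^n` of constant Kähler angle `φ ∈ [0, π/2)` has even
real dimension. -/
theorem even_finrank_of_constKahlerAngle (n : ℕ) (V : Submodule ℝ (En n))
    (φ : ℝ) (hφ0 : 0 ≤ φ) (hφ1 : φ < Real.pi / 2)
    (hV : HasConstKahlerAngle V φ) :
    Even (Module.finrank ℝ V) := by
  have hcos : 0 < Real.cos φ :=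
    Real.cos_pos_of_mem_Ioo ⟨by linarith [Real.pi_pos], hφ1⟩
  -- the linear map T v = π_V (J v) on V
  let T : V →ₗ[ℝ] V :=
    { toFun := fun v => Submodule.orthogonalProjectionOnto V (Jc (v : En n))
      map_add' := by
        intro u v
        simp only [Jc, Submodule.coe_add, smul_add, map_add]
      map_smul' := by
        intro c v
        simp only [Jc, Submodule.coe_smul, RingHom.id_apply]
        rw [smul_comm Complex.I c ((v : En n)), map_smul] }
  have hTinj : Function.Injective T := by
    rw [← LinearMap.ker_eq_bot, LinearMap.ker_eq_bot']
    intro v hv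
    have h := hV v v.2
    have hz : ‖(T v : En n)‖ = 0 := by
      rw [show ((T v : V) : En n) = (T v : En n) from rfl, hv]
      simp
    have h2 : Real.cos φ ^ 2 * ‖(v : En n)‖ ^ 2 = 0 := by
      rw [← h, show ‖(Submodule.orthogonalProjectionOnto V (Jc (v : En n)) : En n)‖ = ‖(T v : En n)‖ from rfl,
        hz]
      ring
    have h3 : ‖(v : En n)‖ = 0 := by
      rcases mul_eq_zero.mp h2 with h | h
      · exact absurd h (by positivity)
      · exact pow_eq_zero_iff (by norm_num) |>.mp h
    exact Subtype.ext (norm_eq_zero.mp h3)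
  -- skew-symmetry of T wrt the real inner product on V
  have hskew : ∀ u v : V, ⟪u, T v⟫_ℝ = -⟪v, T u⟫_ℝ := by
    intro u v
    have h1 : ⟪u, T v⟫_ℝ = ⟪(u : En n), Jc (v : En n)⟫_ℝ :=
      Submodule.inner_orthogonalProjectionOnto_eq_of_mem_left (K := V) u (Jc (v : En n))
    have h2 : ⟪v, T u⟫_ℝ = ⟪(v : En n), Jc (u : En n)⟫_ℝ :=
      Submodule.inner_orthogonalProjectionOnto_eq_of_mem_left (K := V) v (Jc (u : En n))
    have h3 : ⟪(u : En n), Jc (v : En n)⟫_ℝ + ⟪(v : En n), Jc (u : En n)⟫_ℝ = 0 := by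
      simp only [Jc, PiLp.inner_apply, PiLp.smul_apply]
      rw [← Finset.sum_add_distrib]
      apply Finset.sum_eq_zero
      intro i _
      simp only [Complex.inner, smul_eq_mul, Complex.mul_re, Complex.mul_im,
        Complex.I_re, Complex.I_im, Complex.conj_re, Complex.conj_im]
      ring
    rw [h1, h2]
    linarith
  -- matrix of T in an orthonormal basis
  let b := stdOrthonormalBasis ℝ V
  let M := LinearMap.toMatrix b.toBasis b.toBasis T
  have hM : ∀ i j, M i j = ⟪b i, T (b j)⟫_ℝ := by
    intro i j
    simp only [M, LinearMap.toMatrix_apply, OrthonormalBasis.coe_toBasis_repr_apply,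
      OrthonormalBasis.repr_apply_apply, OrthonormalBasis.coe_toBasis]
  have hMt : Matrix.transpose M = -M := by
    ext i j
    simp only [Matrix.transpose_apply, Matrix.neg_apply, hM]
    exact hskew (b j) (b i)
  have hdet : M.det ≠ 0 := by
    have : Function.Bijective T :=
      ⟨hTinj, LinearMap.injective_iff_surjective.mp hTinj⟩
    have hTdet : LinearMap.det T ≠ 0 := by
      have he : ((LinearEquiv.ofBijective T this : V ≃ₗ[ℝ] V) : V →ₗ[ℝ] V) = T := rfl
      have := LinearEquiv.isUnit_det' (LinearEquiv.ofBijective T this)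
      rw [he] at this
      exact this.ne_zero
    rwa [← LinearMap.det_toMatrix b.toBasis] at hTdet
  have hkey : M.det = (-1 : ℝ) ^ (Module.finrank ℝ V) * M.det := by
    conv_lhs => rw [← Matrix.det_transpose, hMt, Matrix.det_neg]
    simp
  have : (-1 : ℝ) ^ (Module.finrank ℝ V) = 1 := by
    have h1 : (1 : ℝ) * M.det = (-1 : ℝ) ^ (Module.finrank ℝ V) * M.det := by
      rw [one_mul]; exact hkey
    exact (mul_right_cancel₀ hdet h1).symm
  exact (neg_one_pow_eq_one_iff_even (by norm_num : (-1:ℝ) ≠ 1)).mp this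
end
end

section
/- Let V be a real subspace of ℂ^n with Kähler-angle decomposition V = V_1 ⊕ ⋯ ⊕ V_r. Then the orthogonal complement of V in ℂ^n (with respect to the real inner product) is the internal orthogonal direct sum of the subspaces ℂV_i ⊖ V_i, for i = 1, …, r, together with the orthogonal complement of ℂV in ℂ^n; moreover each nonzero summand ℂV_i ⊖ V_i occurs only when φ_i ≠ 0, since ℂV_i = V_i when φ_i = 0. -/
noncomputable section

/-- The complex span of a real subspace of `ℂ^n`, viewed as a real subspace. -/
def CSpan {n : ℕ} (V : Submodule ℝ (En n)) : Submodule ℝ (En n) :=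
  (Submodule.span ℂ (V : Set (En n))).restrictScalars ℝ

/-- The real inner product on `ℂ^n` is the real part of the Hermitian one. -/
lemma real_inner_eq_re' {n : ℕ} (x y : En n) : (inner ℝ x y : ℝ) = (inner ℂ x y : ℂ).re := by
  simp [inner, RCLike.inner_apply, Complex.inner]

lemma le_cspan' {n : ℕ} (V : Submodule ℝ (En n)) : V ≤ CSpan V := fun x hx =>
  Submodule.subset_span hx

/-- Hermitian orthogonality extends to complex spans. -/
lemma cspan_inner_zero {n : ℕ} {A B : Submodule ℝ (En n)}
    (h : ∀ v ∈ A, ∀ w ∈ B, (inner ℂ v w : ℂ) = 0) :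
    ∀ x ∈ CSpan A, ∀ y ∈ CSpan B, (inner ℂ x y : ℂ) = 0 := by
  intro x hx y hy
  induction hx using Submodule.span_induction with
  | mem v hv =>
    induction hy using Submodule.span_induction with
    | mem w hw => exact h v hv w hw
    | zero => simp
    | add a b _ _ ha hb => rw [inner_add_right, ha, hb]; simp
    | smul c a _ ha => rw [inner_smul_right, ha]; simp
  | zero => simp
  | add a b _ _ ha hb => rw [inner_add_left, ha, hb]; simp
  | smul c a _ ha => rw [inner_smul_left, ha]; simp

/-- If the projection onto `V` preserves the norm of `x`, then `x ∈ V`. -/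
lemma mem_of_norm_proj {n : ℕ} (V : Submodule ℝ (En n)) (x : En n)
    (h : ‖(Submodule.orthogonalProjectionOnto V x : En n)‖ ^ 2 = ‖x‖ ^ 2) : x ∈ V := by
  have hp := Submodule.norm_sq_eq_add_norm_sq_projection x V
  simp only [Submodule.coe_norm] at hp
  rw [h] at hp
  have h0 : ‖Submodule.orthogonalProjectionOnto Vᗮ x‖ ^ 2 = 0 := by
    rw [Submodule.coe_norm] at *; linarith
  have h0' : (Submodule.orthogonalProjectionOnto Vᗮ x : En n) = 0 := by
    rw [pow_eq_zero_iff (by norm_num), norm_eq_zero] at h0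
    rw [h0, Submodule.coe_zero]
  have : (Submodule.orthogonalProjectionOnto V x : En n) + (Submodule.orthogonalProjectionOnto Vᗮ x : En n) = x :=
    Submodule.starProjection_add_starProjection_orthogonal (K := V) x
  rw [h0', add_zero] at this
  rw [← this]
  exact (Submodule.orthogonalProjectionOnto V x).2

/-- A `J`-invariant real subspace equals its complex span. -/
lemma cspan_eq_of_J_invariant {n : ℕ} (V : Submodule ℝ (En n))
    (hJ : ∀ v ∈ V, Jc v ∈ V) : CSpan V = V := by
  apply le_antisymm _ (le_cspan' V)
  intro x hx
  induction hx using Submodule.span_induction with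
  | mem v hv => exact hv
  | zero => exact V.zero_mem
  | add a b _ _ ha hb => exact V.add_mem ha hb
  | smul c a _ ha =>
    have h1 : c • a = c.re • a + c.im • (Complex.I • a) := by
      have e1 : c • a = (c.re : ℂ) • a + ((c.im : ℂ) * Complex.I) • a := by
        rw [← add_smul, Complex.re_add_im]
      rw [e1, mul_smul, Complex.coe_smul, Complex.coe_smul]
    rw [h1]
    exact V.add_mem (V.smul_mem _ ha) (V.smul_mem _ (hJ a ha))

/-- The complex span of a supremum is the supremum of complex spans. -/
lemma span_iSup' {n : ℕ} {r : ℕ} (Vs : Fin r → Submodule ℝ (En n)) :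
    Submodule.span ℂ ((⨆ i, Vs i : Submodule ℝ (En n)) : Set (En n)) =
      ⨆ i, Submodule.span ℂ ((Vs i : Set (En n))) := by
  apply le_antisymm
  · rw [Submodule.span_le]
    intro x hx
    have : (⨆ i, Vs i : Submodule ℝ (En n)) ≤
        (⨆ i, Submodule.span ℂ ((Vs i : Set (En n)))).restrictScalars ℝ := by
      apply iSup_le
      intro i y hy
      exact le_iSup (fun i => Submodule.span ℂ ((Vs i : Set (En n)))) i
        (Submodule.subset_span hy)
    exact this hx
  · apply iSup_le
    intro i
    exact Submodule.span_mono (SetLike.coe_subset_coe.mpr (le_iSup Vs i))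

/-- Given a Kähler-angle decomposition `V = V_1 ⊕ ⋯ ⊕ V_r`, the real orthogonal
complement of `V` in `ℂ^n` is the internal orthogonal direct sum of the subspaces
`ℂV_i ⊖ V_i` together with the orthogonal complement of `ℂV`; the summand
`ℂV_i ⊖ V_i` is nonzero only when `φ_i ≠ 0`, since `ℂV_i = V_i` when `φ_i = 0`. -/
theorem orthogonal_decomposition_of_kahler_decomposition (n : ℕ)
    (V : Submodule ℝ (En n)) (r : ℕ)
    (Vs : Fin r → Submodule ℝ (En n)) (φ : Fin r → ℝ)
    (hφ : ∀ i, 0 ≤ φ i ∧ φ i ≤ Real.pi / 2)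
    (hφmono : StrictMono φ)
    (hne : ∀ i, Vs i ≠ ⊥)
    (hsum : V = ⨆ i, Vs i)
    (horth : ∀ i j, i ≠ j → ∀ v ∈ Vs i, ∀ w ∈ Vs j, (inner ℝ v w : ℝ) = 0)
    (hangle : ∀ i, HasConstKahlerAngle (Vs i) (φ i))
    (hherm : ∀ i j, i ≠ j → ∀ v ∈ Vs i, ∀ w ∈ Vs j, (inner ℂ v w : ℂ) = 0) :
    (Vᗮ = (⨆ i, (CSpan (Vs i) ⊓ (Vs i)ᗮ)) ⊔ (CSpan V)ᗮ) ∧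
    (∀ i j, i ≠ j → ∀ v ∈ CSpan (Vs i) ⊓ (Vs i)ᗮ, ∀ w ∈ CSpan (Vs j) ⊓ (Vs j)ᗮ,
      (inner ℝ v w : ℝ) = 0) ∧
    (∀ i, ∀ v ∈ CSpan (Vs i) ⊓ (Vs i)ᗮ, ∀ w ∈ (CSpan V)ᗮ, (inner ℝ v w : ℝ) = 0) ∧
    (∀ i, φ i = 0 → CSpan (Vs i) = Vs i) ∧
    (∀ i, CSpan (Vs i) ⊓ (Vs i)ᗮ ≠ ⊥ → φ i ≠ 0) := by
  -- Hermitian orthogonality between complex spans of distinct pieces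
  have cross : ∀ i j, i ≠ j → ∀ x ∈ CSpan (Vs i), ∀ y ∈ CSpan (Vs j),
      (inner ℂ x y : ℂ) = 0 := fun i j hij => cspan_inner_zero (hherm i j hij)
  have crossR : ∀ i j, i ≠ j → ∀ x ∈ CSpan (Vs i), ∀ y ∈ CSpan (Vs j),
      (inner ℝ x y : ℝ) = 0 := by
    intro i j hij x hx y hy
    rw [real_inner_eq_re', cross i j hij x hx y hy, Complex.zero_re]
  have hVsle : ∀ i, Vs i ≤ V := fun i => hsum ▸ le_iSup Vs i
  have hVle : V ≤ CSpan V := le_cspan' V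
  -- each piece of the decomposition is contained in Vᗮ
  have csub_le : ∀ i, CSpan (Vs i) ⊓ (Vs i)ᗮ ≤ Vᗮ := by
    intro i x hx
    obtain ⟨hx1, hx2⟩ := hx
    rw [hsum, ← Submodule.iInf_orthogonal, Submodule.mem_iInf]
    intro j
    by_cases hji : j = i
    · subst hji; exact hx2
    · rw [Submodule.mem_orthogonal]
      intro u hu
      exact (real_inner_eq_re' u x).trans (by
        rw [cross j i hji u (le_cspan' (Vs j) hu) x hx1, Complex.zero_re])
  -- part 4
  have part4 : ∀ i, φ i = 0 → CSpan (Vs i) = Vs i := by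
    intro i hφi
    apply cspan_eq_of_J_invariant
    intro v hv
    apply mem_of_norm_proj
    have := hangle i v hv
    rw [hφi, Real.cos_zero, one_pow, one_mul] at this
    rw [this]
    have : ‖Jc v‖ = ‖v‖ := by
      rw [show Jc v = Complex.I • v from rfl, norm_smul, Complex.norm_I, one_mul]
    rw [this]
  refine ⟨?_, ?_, ?_, part4, ?_⟩
  · -- the main decomposition
    apply le_antisymm
    · intro x hx
      set K := CSpan V with hK
      have hxd : (Submodule.orthogonalProjectionOnto K x : En n) + (Submodule.orthogonalProjectionOnto Kᗮ x : En n) = x :=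
        Submodule.starProjection_add_starProjection_orthogonal (K := K) x
      set p : En n := (Submodule.orthogonalProjectionOnto K x : En n) with hp
      set q : En n := (Submodule.orthogonalProjectionOnto Kᗮ x : En n) with hq
      have hqK : q ∈ Kᗮ := (Submodule.orthogonalProjectionOnto Kᗮ x).2
      have hpK : p ∈ K := (Submodule.orthogonalProjectionOnto K x).2
      have hpV : p ∈ Vᗮ := by
        have hqV : q ∈ Vᗮ := Submodule.orthogonal_le hVle hqK
        have : p = x - q := by rw [← hxd, add_sub_cancel_right]
        rw [this]; exact Submodule.sub_mem _ hx hqV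
      -- p belongs to the supremum of the pieces
      have hpS : p ∈ ⨆ i, (CSpan (Vs i) ⊓ (Vs i)ᗮ) := by
        have hpc : p ∈ ⨆ i, Submodule.span ℂ ((Vs i : Set (En n))) := by
          rw [← span_iSup', ← hsum]; exact hpK
        rw [Submodule.mem_iSup_iff_exists_finsupp] at hpc
        obtain ⟨f, hf, hfs⟩ := hpc
        have hfmem : ∀ i, f i ∈ CSpan (Vs i) ⊓ (Vs i)ᗮ := by
          intro i
          refine ⟨hf i, ?_⟩
          show f i ∈ (Vs i)ᗮ
          rw [Submodule.mem_orthogonal]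
          intro v hv
          -- inner v p = 0, and inner v (f j) = 0 for j ≠ i
          have h0 : (inner ℝ v p : ℝ) = 0 :=
            (Submodule.mem_orthogonal V p).mp hpV v (hVsle i hv)
          have hsum' : (inner ℝ v p : ℝ) = ∑ j ∈ f.support, (inner ℝ v (f j) : ℝ) := by
            rw [← hfs, Finsupp.sum, inner_sum]
          have hzero : ∀ j ∈ f.support, j ≠ i → (inner ℝ v (f j) : ℝ) = 0 := by
            intro j _ hji
            exact crossR i j (Ne.symm hji) v (le_cspan' (Vs i) hv) (f j) (hf j)
          by_cases hi : i ∈ f.support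
          · have := Finset.sum_eq_single_of_mem i hi hzero
            rw [hsum', this] at h0
            exact h0
          · rw [Finsupp.notMem_support_iff.mp hi]
            exact inner_zero_right v
        rw [← hfs, Finsupp.sum]
        exact Submodule.sum_mem _ fun j _ =>
          le_iSup (fun i => CSpan (Vs i) ⊓ (Vs i)ᗮ) j (hfmem j)
      rw [← hxd]
      exact Submodule.add_mem _ (Submodule.mem_sup_left hpS) (Submodule.mem_sup_right hqK)
    · apply sup_le
      · exact iSup_le csub_le
      · exact Submodule.orthogonal_le hVle
  · -- pairwise orthogonality of the pieces
    intro i j hij v hv w hw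
    exact crossR i j hij v hv.1 w hw.1
  · -- orthogonality with (CSpan V)ᗮ
    intro i v hv w hw
    have hvC : v ∈ CSpan V := Submodule.span_mono (hVsle i) hv.1
    exact (Submodule.mem_orthogonal (CSpan V) w).mp hw v hvC
  · -- nontrivial pieces only for nonzero angle
    intro i hne0 hφi
    apply hne0
    rw [part4 i hφi]
    exact (Submodule.orthogonal_disjoint (Vs i)).eq_bot
end
end
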